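/- Fix u ∈ ℝ^m, A ∈ ℝ^{k×k} with A[j,j] > 0, B ∈ ℝ^{m×k}, and D ∈ ℝ^{m×k}. The minimizer over d ∈ ℝ^m with ‖d‖₂ ≤ 1 of the function d ↦ (1/2)A[j,j]‖d‖₂² − (b_j − ∑_{i≠j} A[i,j] d_i)ᵀ d (the restriction of (1/2)Tr(DᵀDA) − Tr(DᵀB) to the j-th column) is given by d_j = u_j / max(‖u_j‖₂, 1), where u_j = (1/A[j,j])(b_j − D a_j) + d_j^{old}, with a_j, b_j the j-th columns of A, B. -/

import Mathlib

open Finset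

set_option maxHeartbeats 800000 in
/-- The block-coordinate dictionary update: the minimizer over the unit `ℓ²`-ball of
`d ↦ (1/2) A[j,j] ‖d‖₂² − (b_j − ∑_{i≠j} A[i,j] d_i)ᵀ d` is
`u_j / max(‖u_j‖₂, 1)`, where `u_j = (1/A[j,j]) (b_j − D a_j) + d_j`. -/
theorem dictionary_column_update (m k : ℕ)
    (A : Matrix (Fin k) (Fin k) ℝ) (B : Matrix (Fin m) (Fin k) ℝ)
    (D : Matrix (Fin m) (Fin k) ℝ) (j : Fin k) (hAjj : 0 < A j j)
    (u dnew : Fin m → ℝ)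
    (hu : u = fun i => (1 / A j j) * (B i j - ∑ l, D i l * A l j) + D i j)
    (hdnew : dnew = fun i => u i / max (Real.sqrt (∑ i', (u i')^2)) 1)
    (F : (Fin m → ℝ) → ℝ)
    (hF : F = fun d => (1/2) * A j j * (∑ i, (d i)^2) -
        ∑ i, (B i j - ∑ l ∈ Finset.univ.erase j, A l j * D i l) * d i) :
    (∑ i, (dnew i)^2 ≤ 1) ∧ ∀ d : Fin m → ℝ, (∑ i, (d i)^2 ≤ 1) → F dnew ≤ F d := by
  set c := A j j with hc
  have hcne : c ≠ 0 := ne_of_gt hAjj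
  -- rewrite the linear coefficient as c * u i
  have hw : ∀ i, B i j - ∑ l ∈ Finset.univ.erase j, A l j * D i l = c * u i := by
    intro i
    have hsplit : ∑ l, D i l * A l j
        = D i j * A j j + ∑ l ∈ Finset.univ.erase j, D i l * A l j :=
      (Finset.add_sum_erase _ _ (Finset.mem_univ j)).symm
    have hcomm : ∑ l ∈ Finset.univ.erase j, A l j * D i l
        = ∑ l ∈ Finset.univ.erase j, D i l * A l j := by
      apply Finset.sum_congr rfl; intro l _; ring
    rw [hu]
    simp only [hcomm]
    field_simp
    rw [hsplit]; ring
  set S := ∑ i', (u i')^2 with hS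
  have hS0 : 0 ≤ S := Finset.sum_nonneg fun i _ => sq_nonneg _
  set s := Real.sqrt S with hs
  have hs0 : 0 ≤ s := Real.sqrt_nonneg _
  have hssq : s ^ 2 = S := Real.sq_sqrt hS0
  set r := max s 1 with hr
  have hr1 : (1:ℝ) ≤ r := le_max_right _ _
  have hr0 : 0 < r := lt_of_lt_of_le one_pos hr1
  have hrs : s ≤ r := le_max_left _ _
  have hsum_dnew : ∑ i, (dnew i)^2 = S / r ^ 2 := by
    rw [hdnew]
    simp only [div_pow, ← Finset.sum_div]
    rfl
  have hdot_dnew : ∑ i, u i * dnew i = S / r := by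
    rw [hdnew, hS, Finset.sum_div]
    apply Finset.sum_congr rfl; intro i _; ring
  have hball : ∑ i, (dnew i)^2 ≤ 1 := by
    rw [hsum_dnew]
    rw [div_le_one (by positivity)]
    calc S = s ^ 2 := hssq.symm
    _ ≤ r ^ 2 := by nlinarith
  refine ⟨hball, fun d hd => ?_⟩
  -- rewrite F
  have hFd : ∀ e : Fin m → ℝ, F e = (1/2) * c * (∑ i, (e i)^2) - c * ∑ i, u i * e i := by
    intro e
    rw [hF]
    simp only
    congr 1
    rw [Finset.mul_sum]
    apply Finset.sum_congr rfl; intro i _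
    rw [hw i]; ring
  rw [hFd, hFd, hsum_dnew, hdot_dnew]
  set T := ∑ i, (d i)^2 with hT
  set P := ∑ i, u i * d i with hP
  have hT0 : 0 ≤ T := Finset.sum_nonneg fun i _ => sq_nonneg _
  -- reduce to scalar inequality
  have key : (1/2) * (S / r^2) - S / r ≤ (1/2) * T - P := by
    rcases le_or_gt S 1 with hS1 | hS1
    · -- small case: r = 1, u itself feasible
      have hsr : s ≤ 1 := by
        rw [hs]
        calc Real.sqrt S ≤ Real.sqrt 1 := Real.sqrt_le_sqrt hS1
        _ = 1 := Real.sqrt_one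
      have hreq : r = 1 := max_eq_right hsr
      rw [hreq]
      have hexp : 0 ≤ ∑ i, (d i - u i)^2 := Finset.sum_nonneg fun i _ => sq_nonneg _
      have hexp2 : ∑ i, (d i - u i)^2 = T - 2*P + S := by
        rw [hT, hP, hS, Finset.mul_sum, ← Finset.sum_sub_distrib, ← Finset.sum_add_distrib]
        apply Finset.sum_congr rfl; intro i _; ring
      rw [hexp2] at hexp
      nlinarith
    · -- large case: r = s > 1
      have hs1 : 1 < s := by
        rw [hs, show (1:ℝ) = Real.sqrt 1 by rw [Real.sqrt_one]]
        exact Real.sqrt_lt_sqrt zero_le_one hS1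
      have hreq : r = s := max_eq_left (le_of_lt hs1)
      have hsne : s ≠ 0 := by positivity
      have hSne : S ≠ 0 := by linarith
      have h1 : S / s^2 = 1 := by rw [hssq, div_self hSne]
      have h2 : S / s = s := by
        rw [← hssq, sq, mul_div_assoc, div_self hsne, mul_one]
      rw [hreq, h1, h2]
      -- Cauchy-Schwarz
      have hCS : P ^ 2 ≤ S * T := by
        rw [hP, hS, hT]
        exact Finset.sum_mul_sq_le_sq_mul_sq _ _ _
      set t := Real.sqrt T with ht
      have ht0 : 0 ≤ t := Real.sqrt_nonneg _
      have htsq : t ^ 2 = T := Real.sq_sqrt hT0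
      have ht1 : t ≤ 1 := by
        rw [ht]
        calc Real.sqrt T ≤ Real.sqrt 1 := Real.sqrt_le_sqrt hd
        _ = 1 := Real.sqrt_one
      have hPst : P ≤ s * t := by
        have hst0 : 0 ≤ s * t := mul_nonneg hs0 ht0
        nlinarith [hCS, hssq, htsq]
      nlinarith [mul_nonneg (sub_nonneg.mpr ht1) (by linarith : (0:ℝ) ≤ 2*s - 1 - t)]
  have := mul_le_mul_of_nonneg_left key (le_of_lt hAjj)
  nlinarith [this]
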